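/- Let n ≥ 1 be an integer, P ≥ 1, C > 0, ε > 0 real numbers, and L = εC/(n(P+1)). For each user k ∈ {1, …, n}, let D_k ⊆ ℂ be a finite demand set with 0 ∈ D_k such that every d ∈ D_k satisfies Im(d) ≥ 0 and −Re(d) ≤ P·Im(d) whenever Re(d) < 0, and let v_k : ℂ → ℝ≥0 be the monotone valuation v_k(d) = max{ w_k(d̄) : d̄ ∈ D_k, d̄ ⪯ d } induced by values w_k : D_k → ℝ≥0 with w_k(0) = 0. Let OPT = max{ ∑_k v_k(d_k) : d_k ∈ D_k for all k, |∑_k d_k| ≤ C }. Then max{ ∑_k v_k(ĥd_k) : d_k ∈ D_k for all k, |∑_k ĥd_k| ≤ (1+2ε)·C } ≥ OPT, where ĥd_k denotes the rounded demand of d_k. -/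

import Mathlib

/-- The rounded demand: real part rounded up (resp. down) to a multiple of `L`
when it is nonnegative (resp. negative), imaginary part always rounded up. -/
noncomputable def roundDemand (L : ℝ) (d : ℂ) : ℂ :=
  if 0 ≤ d.re then
    ⟨(⌈d.re / L⌉ : ℤ) * L, (⌈d.im / L⌉ : ℤ) * L⟩
  else
    ⟨(⌊d.re / L⌋ : ℤ) * L, (⌈d.im / L⌉ : ℤ) * L⟩

/-- The componentwise dominance partial order `⪯` on complex demands:
`f ⪯ g` iff `f = 0`, or the components of `g` dominate those of `f` in
absolute value and agree in sign. -/
def cle (f g : ℂ) : Prop :=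
  f = 0 ∨ (|f.re| ≤ |g.re| ∧ |f.im| ≤ |g.im| ∧
    Real.sign f.re = Real.sign g.re ∧ Real.sign f.im = Real.sign g.im)

lemma ceil_bounds {L x : ℝ} (hL : 0 < L) :
    x ≤ (⌈x / L⌉ : ℤ) * L ∧ (⌈x / L⌉ : ℤ) * L ≤ x + L := by
  have hx : x / L * L = x := div_mul_cancel₀ x hL.ne'
  constructor
  · have h := Int.le_ceil (x / L)
    nlinarith [mul_le_mul_of_nonneg_right h hL.le]
  · have h := Int.ceil_lt_add_one (x / L)
    nlinarith [mul_lt_mul_of_pos_right h hL]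

lemma floor_bounds {L x : ℝ} (hL : 0 < L) :
    x - L ≤ (⌊x / L⌋ : ℤ) * L ∧ (⌊x / L⌋ : ℤ) * L ≤ x := by
  have hx : x / L * L = x := div_mul_cancel₀ x hL.ne'
  constructor
  · have h := Int.sub_one_lt_floor (x / L)
    nlinarith [mul_lt_mul_of_pos_right h hL]
  · have h := Int.floor_le (x / L)
    nlinarith [mul_le_mul_of_nonneg_right h hL.le]

lemma round_abs_sub {L : ℝ} (hL : 0 < L) (d : ℂ) :
    ‖roundDemand L d - d‖ ≤ 2 * L := by
  have him : |(roundDemand L d).im - d.im| ≤ L := by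
    unfold roundDemand
    split <;> simp only [Complex.sub_im] <;>
      · obtain ⟨h1, h2⟩ := ceil_bounds (L := L) (x := d.im) hL
        rw [abs_le]; constructor <;> linarith
  have hre : |(roundDemand L d).re - d.re| ≤ L := by
    unfold roundDemand
    split
    · simp only [Complex.sub_re]
      obtain ⟨h1, h2⟩ := ceil_bounds (L := L) (x := d.re) hL
      rw [abs_le]; constructor <;> linarith
    · simp only [Complex.sub_re]
      obtain ⟨h1, h2⟩ := floor_bounds (L := L) (x := d.re) hL
      rw [abs_le]; constructor <;> linarith
  calc ‖roundDemand L d - d‖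
      ≤ |(roundDemand L d - d).re| + |(roundDemand L d - d).im| :=
        Complex.norm_le_abs_re_add_abs_im _
    _ ≤ 2 * L := by simp only [Complex.sub_re, Complex.sub_im]; linarith

lemma cle_round {L : ℝ} (hL : 0 < L) (d : ℂ) (hd : 0 ≤ d.im) :
    |d.re| ≤ |(roundDemand L d).re| ∧ |d.im| ≤ |(roundDemand L d).im| ∧
      Real.sign d.re = Real.sign (roundDemand L d).re ∧
      Real.sign d.im = Real.sign (roundDemand L d).im := by
  by_cases h : 0 ≤ d.re
  · have hre := ceil_bounds (L := L) (x := d.re) hL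
    have him := ceil_bounds (L := L) (x := d.im) hL
    unfold roundDemand
    rw [if_pos h]
    simp only
    refine ⟨?_, ?_, ?_, ?_⟩
    · rw [abs_of_nonneg h, abs_of_nonneg (le_trans h hre.1)]; exact hre.1
    · rw [abs_of_nonneg hd, abs_of_nonneg (le_trans hd him.1)]; exact him.1
    · rcases eq_or_lt_of_le h with h0 | h0
      · rw [← h0]; simp
      · rw [Real.sign_of_pos h0, Real.sign_of_pos (lt_of_lt_of_le h0 hre.1)]
    · rcases eq_or_lt_of_le hd with h0 | h0
      · rw [← h0]; simp
      · rw [Real.sign_of_pos h0, Real.sign_of_pos (lt_of_lt_of_le h0 him.1)]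
  · push_neg at h
    have hre := floor_bounds (L := L) (x := d.re) hL
    have him := ceil_bounds (L := L) (x := d.im) hL
    unfold roundDemand
    rw [if_neg (not_le.mpr h)]
    simp only
    refine ⟨?_, ?_, ?_, ?_⟩
    · rw [abs_of_neg h, abs_of_neg (lt_of_le_of_lt hre.2 h)]; linarith [hre.2]
    · rw [abs_of_nonneg hd, abs_of_nonneg (le_trans hd him.1)]; exact him.1
    · rw [Real.sign_of_neg h, Real.sign_of_neg (lt_of_le_of_lt hre.2 h)]
    · rcases eq_or_lt_of_le hd with h0 | h0
      · rw [← h0]; simp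
      · rw [Real.sign_of_pos h0, Real.sign_of_pos (lt_of_lt_of_le h0 him.1)]

lemma cle_trans {x d r : ℂ} (h1 : cle x d)
    (h2 : |d.re| ≤ |r.re| ∧ |d.im| ≤ |r.im| ∧
      Real.sign d.re = Real.sign r.re ∧ Real.sign d.im = Real.sign r.im) :
    cle x r := by
  rcases h1 with h1 | h1
  · exact Or.inl h1
  · exact Or.inr ⟨h1.1.trans h2.1, h1.2.1.trans h2.2.1,
      h1.2.2.1.trans h2.2.2.1, h1.2.2.2.trans h2.2.2.2⟩

theorem stmt_10 (n : ℕ) (hn : 1 ≤ n) (P C ε L : ℝ)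
    (hP : 1 ≤ P) (hC : 0 < C) (hε : 0 < ε)
    (hL : L = ε * C / (n * (P + 1)))
    (D : Fin n → Finset ℂ) (hD0 : ∀ k, (0 : ℂ) ∈ D k)
    (hDIm : ∀ k, ∀ d ∈ D k, 0 ≤ d.im)
    (hDArg : ∀ k, ∀ d ∈ D k, d.re < 0 → -d.re ≤ P * d.im)
    (w : Fin n → ℂ → ℝ) (hw0 : ∀ k, w k 0 = 0)
    (hwpos : ∀ k, ∀ d ∈ D k, 0 ≤ w k d)
    (v : Fin n → ℂ → ℝ)
    (hv : ∀ k (d : ℂ), IsGreatest (w k '' {x : ℂ | x ∈ D k ∧ cle x d}) (v k d)) :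
    ∀ d : Fin n → ℂ, (∀ k, d k ∈ D k) → ‖∑ k, d k‖ ≤ C →
      ∃ e : Fin n → ℂ, (∀ k, e k ∈ D k) ∧
        ‖∑ k, roundDemand L (e k)‖ ≤ (1 + 2 * ε) * C ∧
        ∑ k, v k (d k) ≤ ∑ k, v k (roundDemand L (e k)) := by
  intro d hd hcap
  have hnpos : (0:ℝ) < n := by exact_mod_cast hn
  have hLpos : 0 < L := by
    rw [hL]; positivity
  refine ⟨d, hd, ?_, ?_⟩
  · have key : ‖∑ k, roundDemand L (d k)‖ ≤ C + n * (2 * L) := by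
      have : (∑ k, roundDemand L (d k)) =
          (∑ k, d k) + ∑ k, (roundDemand L (d k) - d k) := by
        rw [← Finset.sum_add_distrib]; congr 1; ext k; ring
      rw [this]
      calc ‖(∑ k, d k) + ∑ k, (roundDemand L (d k) - d k)‖
          ≤ ‖∑ k, d k‖ + ‖∑ k, (roundDemand L (d k) - d k)‖ :=
            norm_add_le _ _
        _ ≤ C + n * (2 * L) := by
            gcongr
            calc ‖∑ k, (roundDemand L (d k) - d k)‖
                ≤ ∑ k, ‖roundDemand L (d k) - d k‖ :=
                  norm_sum_le _ _
              _ ≤ ∑ _k : Fin n, 2 * L :=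
                  Finset.sum_le_sum fun k _ => round_abs_sub hLpos (d k)
              _ = n * (2 * L) := by simp [mul_comm]
    have hnL : (n:ℝ) * (2 * L) ≤ 2 * ε * C := by
      have heq : (n:ℝ) * (2 * L) = 2 * ε * C / (P + 1) := by
        rw [hL]; field_simp
      rw [heq, div_le_iff₀ (by linarith : (0:ℝ) < P + 1)]
      nlinarith [mul_pos (mul_pos hε hC) (by linarith : (0:ℝ) < P)]
    linarith
  · apply Finset.sum_le_sum
    intro k _
    obtain ⟨x0, ⟨hx0D, hx0le⟩, hx0w⟩ := (hv k (d k)).1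
    have hcle : cle x0 (roundDemand L (d k)) :=
      cle_trans hx0le (cle_round hLpos (d k) (hDIm k (d k) (hd k)))
    rw [← hx0w]
    exact (hv k (roundDemand L (d k))).2 ⟨x0, ⟨hx0D, hcle⟩, rfl⟩
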